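/- arXiv:1807.05625 — 4 statements merged into one kernel-verified Lean document; each statement's English description precedes it below -/
import Mathlib

section
/- For m, n ≥ 2, the ellipsoid E = {z ∈ ℝ^m ⊗ ℝ^n : |z₁₁|²/3 + |z_{mn}|²/2 + Σ_{(i,j)≠(1,1),(m,n)} |z_{ij}|² ≤ 1} is not a tensorial body: there exist no 0-symmetric convex bodies Q₁ ⊆ ℝ^m, Q₂ ⊆ ℝ^n with Q₁ ⊗_π Q₂ ⊆ E ⊆ Q₁ ⊗_ε Q₂. -/
open Set

/-- Outer product of two vectors, as an `m × n` matrix. -/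
def outer {m n : ℕ} (x : Fin m → ℝ) (y : Fin n → ℝ) : Matrix (Fin m) (Fin n) ℝ :=
  fun i j => x i * y j

/-- Hilbert–Schmidt (Frobenius) inner product on matrices. -/
def hsInner {m n : ℕ} (A B : Matrix (Fin m) (Fin n) ℝ) : ℝ := ∑ i, ∑ j, A i j * B i j

/-- Polar of a set of matrices w.r.t. the Hilbert–Schmidt inner product. -/
def polar {m n : ℕ} (C : Set (Matrix (Fin m) (Fin n) ℝ)) : Set (Matrix (Fin m) (Fin n) ℝ) :=
  {z | ∀ u ∈ C, |hsInner u z| ≤ 1}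

/-- Polar of a set of vectors w.r.t. the standard inner product. -/
def polarVec {d : ℕ} (C : Set (Fin d → ℝ)) : Set (Fin d → ℝ) :=
  {z | ∀ u ∈ C, |∑ i, u i * z i| ≤ 1}

/-- A 0-symmetric convex body: compact, convex, nonempty interior, symmetric. -/
def IsSymCB {E : Type*} [AddCommGroup E] [Module ℝ E] [TopologicalSpace E] (Q : Set E) : Prop :=
  IsCompact Q ∧ Convex ℝ Q ∧ (interior Q).Nonempty ∧ Q = -Q

/-- Projective tensor product of convex bodies. -/
def projTP {m n : ℕ} (Q₁ : Set (Fin m → ℝ)) (Q₂ : Set (Fin n → ℝ)) :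
    Set (Matrix (Fin m) (Fin n) ℝ) :=
  convexHull ℝ {M | ∃ x ∈ Q₁, ∃ y ∈ Q₂, M = outer x y}

/-- Injective tensor product of convex bodies. -/
def injTP {m n : ℕ} (Q₁ : Set (Fin m → ℝ)) (Q₂ : Set (Fin n → ℝ)) :
    Set (Matrix (Fin m) (Fin n) ℝ) :=
  polar (projTP (polarVec Q₁) (polarVec Q₂))

lemma exists_coord_max {d : ℕ} {Q : Set (Fin d → ℝ)} (hQ : IsSymCB Q) (i : Fin d) :
    ∃ α > 0, (∀ x ∈ Q, |x i| ≤ α) ∧ ∃ x ∈ Q, x i = α := by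
  obtain ⟨hcomp, hconv, ⟨p, hp⟩, hsym⟩ := hQ
  have hnegmem : ∀ x ∈ Q, -x ∈ Q := by
    intro x hx
    rw [hsym]
    simpa using hx
  obtain ⟨r, hr, hball⟩ := Metric.mem_nhds_iff.mp (mem_interior_iff_mem_nhds.mp hp)
  have hQv : ∀ v : Fin d → ℝ, ‖v‖ < r → v ∈ Q := by
    intro v hv
    have h1 : p + v ∈ Q := hball (by
      rw [Metric.mem_ball, dist_eq_norm, add_sub_cancel_left]; exact hv)
    have h2 : -p + v ∈ Q := by
      have hm : p - v ∈ Q := hball (by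
        rw [Metric.mem_ball, dist_eq_norm, sub_sub_cancel_left, norm_neg]; exact hv)
      have := hnegmem _ hm
      rw [neg_sub] at this
      rw [neg_add_eq_sub]
      exact this
    have hc := hconv h1 h2 (by norm_num : (0:ℝ) ≤ 1/2) (by norm_num : (0:ℝ) ≤ 1/2)
      (by norm_num)
    have heq : (1/2:ℝ) • (p + v) + (1/2:ℝ) • (-p + v) = v := by module
    rwa [heq] at hc
  have hsing : (Pi.single i (r/2) : Fin d → ℝ) ∈ Q := by
    apply hQv
    rw [Pi.norm_single, Real.norm_eq_abs, abs_of_pos (by linarith)]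
    linarith
  have hne : Q.Nonempty := ⟨_, hsing⟩
  obtain ⟨x₀, hx₀Q, hx₀⟩ := hcomp.exists_isMaxOn hne (continuous_apply i).continuousOn
  rw [isMaxOn_iff] at hx₀
  refine ⟨x₀ i, ?_, ?_, ⟨x₀, hx₀Q, rfl⟩⟩
  · have := hx₀ _ hsing
    rw [Pi.single_eq_same] at this
    linarith
  · intro x hx
    rw [abs_le]
    constructor
    · have := hx₀ _ (hnegmem x hx)
      simp only [Pi.neg_apply] at this
      linarith
    · exact hx₀ x hx

lemma single_inv_mem_polarVec {d : ℕ} {Q : Set (Fin d → ℝ)} (i : Fin d) {α : ℝ}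
    (hα : 0 < α) (hb : ∀ x ∈ Q, |x i| ≤ α) : (Pi.single i α⁻¹ : Fin d → ℝ) ∈ polarVec Q := by
  intro x hx
  have hs : ∑ k, x k * (Pi.single i α⁻¹ : Fin d → ℝ) k = x i * α⁻¹ := by
    rw [Finset.sum_eq_single i]
    · rw [Pi.single_eq_same]
    · intro k _ hk; rw [Pi.single_eq_of_ne hk, mul_zero]
    · simp
  rw [hs, abs_mul, abs_inv, abs_of_pos hα]
  calc |x i| * α⁻¹ ≤ α * α⁻¹ := by
        exact mul_le_mul_of_nonneg_right (hb x hx) (by positivity)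
    _ = 1 := mul_inv_cancel₀ hα.ne'

lemma hsInner_outer_single {m n : ℕ} (i0 : Fin m) (j0 : Fin n) (a b : ℝ)
    (z : Matrix (Fin m) (Fin n) ℝ) :
    hsInner (outer (Pi.single i0 a) (Pi.single j0 b)) z = a * b * z i0 j0 := by
  unfold hsInner outer
  rw [Finset.sum_eq_single i0]
  · rw [Finset.sum_eq_single j0]
    · rw [Pi.single_eq_same, Pi.single_eq_same, mul_assoc]
    · intro j _ hj; rw [Pi.single_eq_of_ne hj, mul_zero, zero_mul]
    · simp
  · intro i _ hi
    apply Finset.sum_eq_zero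
    intro j _
    rw [Pi.single_eq_of_ne hi, zero_mul, zero_mul]
  · simp

theorem not_tensorial_ellipsoid (m n : ℕ) (hm : 2 ≤ m) (hn : 2 ≤ n) :
    ¬ ∃ (Q₁ : Set (Fin m → ℝ)) (Q₂ : Set (Fin n → ℝ)), IsSymCB Q₁ ∧ IsSymCB Q₂ ∧
      projTP Q₁ Q₂ ⊆
        {z : Matrix (Fin m) (Fin n) ℝ |
          (z ⟨0, by omega⟩ ⟨0, by omega⟩) ^ 2 / 3 +
          (z ⟨m - 1, by omega⟩ ⟨n - 1, by omega⟩) ^ 2 / 2 +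
          ∑ q ∈ (Finset.univ \ {((⟨0, by omega⟩ : Fin m), (⟨0, by omega⟩ : Fin n)),
              ((⟨m - 1, by omega⟩ : Fin m), (⟨n - 1, by omega⟩ : Fin n))} :
              Finset (Fin m × Fin n)), (z q.1 q.2) ^ 2 ≤ 1} ∧
      {z : Matrix (Fin m) (Fin n) ℝ |
          (z ⟨0, by omega⟩ ⟨0, by omega⟩) ^ 2 / 3 +
          (z ⟨m - 1, by omega⟩ ⟨n - 1, by omega⟩) ^ 2 / 2 +
          ∑ q ∈ (Finset.univ \ {((⟨0, by omega⟩ : Fin m), (⟨0, by omega⟩ : Fin n)),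
              ((⟨m - 1, by omega⟩ : Fin m), (⟨n - 1, by omega⟩ : Fin n))} :
              Finset (Fin m × Fin n)), (z q.1 q.2) ^ 2 ≤ 1} ⊆ injTP Q₁ Q₂ := by
  rintro ⟨Q₁, Q₂, hQ₁, hQ₂, hE1, hE2⟩
  have hm0 : 0 < m := by omega
  have hn0 : 0 < n := by omega
  set I0 : Fin m := ⟨0, by omega⟩ with hI0def
  set I1 : Fin m := ⟨m - 1, by omega⟩ with hI1def
  set J0 : Fin n := ⟨0, by omega⟩ with hJ0def
  set J1 : Fin n := ⟨n - 1, by omega⟩ with hJ1def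
  have hI : I0 ≠ I1 := by simp only [hI0def, hI1def, ne_eq, Fin.mk.injEq]; omega
  have hJ : J0 ≠ J1 := by simp only [hJ0def, hJ1def, ne_eq, Fin.mk.injEq]; omega
  obtain ⟨α, hα, hαb, xα, hxαQ, hxα⟩ := exists_coord_max hQ₁ I0
  obtain ⟨β, hβ, hβb, xβ, hxβQ, hxβ⟩ := exists_coord_max hQ₁ I1
  obtain ⟨γ, hγ, hγb, yγ, hyγQ, hyγ⟩ := exists_coord_max hQ₂ J0
  obtain ⟨δ, hδ, hδb, yδ, hyδQ, hyδ⟩ := exists_coord_max hQ₂ J1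
  -- Upper bounds from projTP ⊆ E on mixed coordinates
  have upper : ∀ x ∈ Q₁, ∀ y ∈ Q₂, ∀ (i : Fin m) (j : Fin n),
      (i, j) ∈ (Finset.univ \ {(I0, J0), (I1, J1)} : Finset (Fin m × Fin n)) →
      (x i * y j) ^ 2 ≤ 1 := by
    intro x hx y hy i j hij
    have hmem : outer x y ∈ projTP Q₁ Q₂ :=
      subset_convexHull ℝ _ ⟨x, hx, y, hy, rfl⟩
    have h := hE1 hmem
    simp only [Set.mem_setOf_eq] at h
    have hsingle : (outer x y i j) ^ 2 ≤
        ∑ q ∈ (Finset.univ \ {(I0, J0), (I1, J1)} : Finset (Fin m × Fin n)),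
          (outer x y q.1 q.2) ^ 2 :=
      Finset.single_le_sum (f := fun q => (outer x y q.1 q.2) ^ 2)
        (fun q _ => sq_nonneg _) hij
    have h1 : (0:ℝ) ≤ (outer x y I0 J0) ^ 2 / 3 := by positivity
    have h2 : (0:ℝ) ≤ (outer x y I1 J1) ^ 2 / 2 := by positivity
    have : (outer x y i j) ^ 2 ≤ 1 := by linarith
    simpa [outer] using this
  have hmixmem1 : ((I0, J1) : Fin m × Fin n) ∈
      (Finset.univ \ {(I0, J0), (I1, J1)} : Finset (Fin m × Fin n)) := by
    rw [Finset.mem_sdiff]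
    refine ⟨Finset.mem_univ _, ?_⟩
    intro hmem
    simp only [Finset.mem_insert, Finset.mem_singleton, Prod.mk.injEq] at hmem
    rcases hmem with ⟨h1, h2⟩ | ⟨h1, h2⟩
    · exact hJ h2.symm
    · exact hI h1
  have hmixmem2 : ((I1, J0) : Fin m × Fin n) ∈
      (Finset.univ \ {(I0, J0), (I1, J1)} : Finset (Fin m × Fin n)) := by
    rw [Finset.mem_sdiff]
    refine ⟨Finset.mem_univ _, ?_⟩
    intro hmem
    simp only [Finset.mem_insert, Finset.mem_singleton, Prod.mk.injEq] at hmem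
    rcases hmem with ⟨h1, h2⟩ | ⟨h1, h2⟩
    · exact hI h1.symm
    · exact hJ h2
  have hαδ : α * δ ≤ 1 := by
    have := upper xα hxαQ yδ hyδQ I0 J1 hmixmem1
    rw [hxα, hyδ] at this
    nlinarith
  have hβγ : β * γ ≤ 1 := by
    have := upper xβ hxβQ yγ hyγQ I1 J0 hmixmem2
    rw [hxβ, hyγ] at this
    nlinarith
  -- Lower bounds from E ⊆ injTP
  have lower : ∀ (i : Fin m) (j : Fin n) (c a b : ℝ), 0 < a → 0 < b → 0 ≤ c →
      (∀ x ∈ Q₁, |x i| ≤ a) → (∀ y ∈ Q₂, |y j| ≤ b) →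
      (fun i' j' => if i' = i ∧ j' = j then c else 0) ∈ injTP Q₁ Q₂ →
      c ≤ a * b := by
    intro i j c a b ha hb hc hbQ₁ hbQ₂ hzinj
    have humem : outer (Pi.single i a⁻¹) (Pi.single j b⁻¹) ∈
        projTP (polarVec Q₁) (polarVec Q₂) :=
      subset_convexHull ℝ _ ⟨_, single_inv_mem_polarVec i ha hbQ₁,
        _, single_inv_mem_polarVec j hb hbQ₂, rfl⟩
    have h := hzinj _ humem
    erw [hsInner_outer_single i j a⁻¹ b⁻¹] at h
    simp only [if_pos (⟨rfl, rfl⟩ : i = i ∧ j = j)] at h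
    rw [abs_of_nonneg (by positivity)] at h
    have h3 := mul_le_mul_of_nonneg_left h (le_of_lt (mul_pos ha hb))
    rw [mul_one] at h3
    calc c = a * b * (a⁻¹ * b⁻¹ * c) := by field_simp
      _ ≤ a * b := h3
  -- membership of the two spike matrices in E
  have spikeE : ∀ (i : Fin m) (j : Fin n) (c : ℝ),
      (if I0 = i ∧ J0 = j then c else 0) ^ 2 / 3 +
      (if I1 = i ∧ J1 = j then c else 0) ^ 2 / 2 +
      (if ((i, j) : Fin m × Fin n) ∈
          (Finset.univ \ {(I0, J0), (I1, J1)} : Finset (Fin m × Fin n)) then c ^ 2 else 0)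
        ≤ 1 →
      (fun i' j' => if i' = i ∧ j' = j then c else 0) ∈
        {z : Matrix (Fin m) (Fin n) ℝ |
          (z I0 J0) ^ 2 / 3 + (z I1 J1) ^ 2 / 2 +
          ∑ q ∈ (Finset.univ \ {(I0, J0), (I1, J1)} : Finset (Fin m × Fin n)),
            (z q.1 q.2) ^ 2 ≤ 1} := by
    intro i j c hbound
    show (if I0 = i ∧ J0 = j then c else 0) ^ 2 / 3 +
      (if I1 = i ∧ J1 = j then c else 0) ^ 2 / 2 +
      ∑ q ∈ (Finset.univ \ {(I0, J0), (I1, J1)} : Finset (Fin m × Fin n)),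
        (if q.1 = i ∧ q.2 = j then c else 0) ^ 2 ≤ 1
    have e3 : ∑ q ∈ (Finset.univ \ {(I0, J0), (I1, J1)} : Finset (Fin m × Fin n)),
        (if q.1 = i ∧ q.2 = j then c else 0) ^ 2 =
        (if ((i, j) : Fin m × Fin n) ∈
          (Finset.univ \ {(I0, J0), (I1, J1)} : Finset (Fin m × Fin n)) then c ^ 2 else 0) := by
      by_cases hmem : ((i, j) : Fin m × Fin n) ∈
          (Finset.univ \ {(I0, J0), (I1, J1)} : Finset (Fin m × Fin n))
      · rw [if_pos hmem]
        rw [Finset.sum_eq_single_of_mem (i, j) hmem]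
        · rw [if_pos ⟨rfl, rfl⟩]
        · intro q _ hq
          have : ¬(q.1 = i ∧ q.2 = j) := by
            rintro ⟨h1, h2⟩
            exact hq (Prod.ext h1 h2)
          rw [if_neg this]
          norm_num
      · rw [if_neg hmem]
        apply Finset.sum_eq_zero
        intro q hq
        have : ¬(q.1 = i ∧ q.2 = j) := by
          rintro ⟨h1, h2⟩
          exact hmem (h1 ▸ h2 ▸ hq)
        rw [if_neg this]
        norm_num
    rw [e3]
    exact hbound
  have hαγ : Real.sqrt 3 ≤ α * γ := by
    apply lower I0 J0 (Real.sqrt 3) α γ hα hγ (Real.sqrt_nonneg 3) hαb hγb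
    apply hE2
    apply spikeE
    have hmem : ((I0, J0) : Fin m × Fin n) ∉
        (Finset.univ \ {(I0, J0), (I1, J1)} : Finset (Fin m × Fin n)) := by
      simp
    rw [if_pos ⟨rfl, rfl⟩, if_neg (by rintro ⟨h1, h2⟩; exact hI h1.symm), if_neg hmem,
      Real.sq_sqrt (by norm_num : (0:ℝ) ≤ 3)]
    norm_num
  have hβδ : Real.sqrt 2 ≤ β * δ := by
    apply lower I1 J1 (Real.sqrt 2) β δ hβ hδ (Real.sqrt_nonneg 2) hβb hδb
    apply hE2
    apply spikeE
    have hmem : ((I1, J1) : Fin m × Fin n) ∉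
        (Finset.univ \ {(I0, J0), (I1, J1)} : Finset (Fin m × Fin n)) := by
      simp
    rw [if_neg (by rintro ⟨h1, h2⟩; exact hI h1), if_pos ⟨rfl, rfl⟩, if_neg hmem,
      Real.sq_sqrt (by norm_num : (0:ℝ) ≤ 2)]
    norm_num
  have key : Real.sqrt 3 * Real.sqrt 2 ≤ 1 := by
    calc Real.sqrt 3 * Real.sqrt 2 ≤ (α * γ) * (β * δ) :=
          mul_le_mul hαγ hβδ (Real.sqrt_nonneg 2) (by positivity)
      _ = (α * δ) * (β * γ) := by ring
      _ ≤ 1 * 1 := mul_le_mul hαδ hβγ (by positivity) (by linarith)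
      _ = 1 := by norm_num
  have h6 : Real.sqrt 6 ≤ 1 := by
    rw [show (6:ℝ) = 3 * 2 by norm_num, Real.sqrt_mul (by norm_num : (0:ℝ) ≤ 3)]
    exact key
  nlinarith [Real.sq_sqrt (by norm_num : (0:ℝ) ≤ 6), Real.sqrt_nonneg 6, h6]
end

section
/- Let E = T(B₂^{m,n}) ⊆ ℝ^m ⊗ ℝ^n be an ellipsoid with B₂^m ⊗_π B₂^n ⊆ E ⊆ B₂^m ⊗_ε B₂^n. Then for L = T⁻¹ and L = Tᵗ, the identity ⟨x,z⟩⟨y,w⟩ = (⟨L(x⊗y), L(z⊗w)⟩_H + ⟨L(x⊗w), L(z⊗y)⟩_H)/2 holds for all x,z ∈ ℝ^m, y,w ∈ ℝ^n; and conversely, these identities imply the inclusions. -/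
open Set

/-- A linear map on the matrix space, given by a big matrix indexed by pairs. -/
def act {m n : ℕ} (T : Matrix (Fin m × Fin n) (Fin m × Fin n) ℝ)
    (A : Matrix (Fin m) (Fin n) ℝ) : Matrix (Fin m) (Fin n) ℝ :=
  fun i j => ∑ q, T (i, j) q * A q.1 q.2

/-- The Hilbert–Schmidt unit ball of matrices. -/
def hsBall (m n : ℕ) : Set (Matrix (Fin m) (Fin n) ℝ) := {A | hsInner A A ≤ 1}

/-- The Euclidean unit ball in ℝ^d. -/
def euclBall (d : ℕ) : Set (Fin d → ℝ) := {x | ∑ i, x i ^ 2 ≤ 1}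


namespace EllAux
variable {m n : ℕ}

lemma hsInner_eq (A B : Matrix (Fin m) (Fin n) ℝ) :
    hsInner A B = ∑ q : Fin m × Fin n, A q.1 q.2 * B q.1 q.2 := by
  rw [hsInner]
  exact (Fintype.sum_prod_type (f := fun q : Fin m × Fin n => A q.1 q.2 * B q.1 q.2)).symm

lemma hsInner_comm (A B : Matrix (Fin m) (Fin n) ℝ) : hsInner A B = hsInner B A := by
  simp [hsInner, mul_comm]

lemma hsInner_self_nonneg (A : Matrix (Fin m) (Fin n) ℝ) : 0 ≤ hsInner A A :=
  Finset.sum_nonneg fun i _ => Finset.sum_nonneg fun j _ => mul_self_nonneg _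

lemma hsInner_CS (A B : Matrix (Fin m) (Fin n) ℝ) :
    (hsInner A B) ^ 2 ≤ hsInner A A * hsInner B B := by
  rw [hsInner_eq, hsInner_eq, hsInner_eq]
  have := Finset.sum_mul_sq_le_sq_mul_sq Finset.univ
    (fun q : Fin m × Fin n => A q.1 q.2) (fun q => B q.1 q.2)
  simpa [sq] using this

lemma hsInner_add_left (A B C : Matrix (Fin m) (Fin n) ℝ) :
    hsInner (A + B) C = hsInner A C + hsInner B C := by
  simp [hsInner, Matrix.add_apply, add_mul, Finset.sum_add_distrib]

lemma hsInner_smul_left (c : ℝ) (A C : Matrix (Fin m) (Fin n) ℝ) :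
    hsInner (c • A) C = c * hsInner A C := by
  simp [hsInner, Matrix.smul_apply, smul_eq_mul, Finset.mul_sum, mul_assoc]

lemma hsInner_add_right (A B C : Matrix (Fin m) (Fin n) ℝ) :
    hsInner C (A + B) = hsInner C A + hsInner C B := by
  rw [hsInner_comm, hsInner_add_left, hsInner_comm A C, hsInner_comm B C]

lemma hsInner_smul_right (c : ℝ) (A C : Matrix (Fin m) (Fin n) ℝ) :
    hsInner C (c • A) = c * hsInner C A := by
  rw [hsInner_comm, hsInner_smul_left, hsInner_comm A C]

lemma act_add (L : Matrix (Fin m × Fin n) (Fin m × Fin n) ℝ) (A B : Matrix (Fin m) (Fin n) ℝ) :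
    act L (A + B) = act L A + act L B := by
  funext i j
  simp [act, Matrix.add_apply, mul_add, Finset.sum_add_distrib]

lemma act_smul (L : Matrix (Fin m × Fin n) (Fin m × Fin n) ℝ) (c : ℝ)
    (A : Matrix (Fin m) (Fin n) ℝ) : act L (c • A) = c • act L A := by
  funext i j
  simp [act, Matrix.smul_apply, smul_eq_mul, Finset.mul_sum]
  exact Finset.sum_congr rfl fun q _ => by ring

lemma act_linear (L : Matrix (Fin m × Fin n) (Fin m × Fin n) ℝ) :
    IsLinearMap ℝ (act (m := m) (n := n) L) :=
  ⟨act_add L, fun c A => act_smul L c A⟩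

lemma hsInner_act (T : Matrix (Fin m × Fin n) (Fin m × Fin n) ℝ)
    (A B : Matrix (Fin m) (Fin n) ℝ) :
    hsInner (act T A) B = hsInner A (act T.transpose B) := by
  simp only [hsInner_eq, act, Finset.sum_mul, Finset.mul_sum]
  rw [Finset.sum_comm]
  exact Finset.sum_congr rfl fun q _ => Finset.sum_congr rfl fun p _ => by
    simp [Matrix.transpose_apply]; ring

lemma act_act (T S : Matrix (Fin m × Fin n) (Fin m × Fin n) ℝ)
    (A : Matrix (Fin m) (Fin n) ℝ) : act T (act S A) = act (T * S) A := by
  funext i j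
  simp only [act, Matrix.mul_apply, Finset.sum_mul, Finset.mul_sum]
  rw [Finset.sum_comm]
  exact Finset.sum_congr rfl fun q _ => Finset.sum_congr rfl fun p _ => by ring

lemma act_one (A : Matrix (Fin m) (Fin n) ℝ) :
    act (1 : Matrix (Fin m × Fin n) (Fin m × Fin n) ℝ) A = A := by
  funext i j
  simp [act, Matrix.one_apply]

lemma hsInner_outer (x z : Fin m → ℝ) (y w : Fin n → ℝ) :
    hsInner (outer x y) (outer z w) = (∑ i, x i * z i) * (∑ j, y j * w j) := by
  simp only [hsInner, outer, Finset.sum_mul, Finset.mul_sum]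
  rw [Finset.sum_comm]
  exact Finset.sum_congr rfl fun j _ => Finset.sum_congr rfl fun i _ => by ring

lemma outer_add_left (x x' : Fin m → ℝ) (y : Fin n → ℝ) :
    outer (x + x') y = outer x y + outer x' y := by
  funext i j; simp [outer, add_mul]

lemma outer_add_right (x : Fin m → ℝ) (y y' : Fin n → ℝ) :
    outer x (y + y') = outer x y + outer x y' := by
  funext i j; simp [outer, mul_add]

lemma outer_smul_left (c : ℝ) (x : Fin m → ℝ) (y : Fin n → ℝ) :
    outer (c • x) y = c • outer x y := by
  funext i j; simp [outer, mul_assoc]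

lemma outer_smul_right (c : ℝ) (x : Fin m → ℝ) (y : Fin n → ℝ) :
    outer x (c • y) = c • outer x y := by
  funext i j; simp [outer]; ring


variable {m n : ℕ}

/-- The four-argument form. -/
def F (L : Matrix (Fin m × Fin n) (Fin m × Fin n) ℝ) (x z : Fin m → ℝ) (y w : Fin n → ℝ) : ℝ :=
  hsInner (act L (outer x y)) (act L (outer z w))

lemma F_swap (L : Matrix (Fin m × Fin n) (Fin m × Fin n) ℝ) (x z : Fin m → ℝ)
    (y w : Fin n → ℝ) : F L x z y w = F L z x w y := hsInner_comm _ _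

lemma F_add1 (L) (x x' z : Fin m → ℝ) (y w : Fin n → ℝ) :
    F L (x + x') z y w = F L x z y w + F L x' z y w := by
  rw [F, outer_add_left, act_add, hsInner_add_left]; rfl

lemma F_add2 (L) (x z z' : Fin m → ℝ) (y w : Fin n → ℝ) :
    F L x (z + z') y w = F L x z y w + F L x z' y w := by
  rw [F, outer_add_left, act_add, hsInner_add_right]; rfl

lemma F_add3 (L) (x z : Fin m → ℝ) (y y' w : Fin n → ℝ) :
    F L x z (y + y') w = F L x z y w + F L x z y' w := by
  rw [F, outer_add_right, act_add, hsInner_add_left]; rfl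

lemma F_add4 (L) (x z : Fin m → ℝ) (y w w' : Fin n → ℝ) :
    F L x z y (w + w') = F L x z y w + F L x z y w' := by
  rw [F, outer_add_right, act_add, hsInner_add_right]; rfl

lemma F_smul1 (L) (c : ℝ) (x z : Fin m → ℝ) (y w : Fin n → ℝ) :
    F L (c • x) z y w = c * F L x z y w := by
  rw [F, outer_smul_left, act_smul, hsInner_smul_left]; rfl

lemma F_smul2 (L) (c : ℝ) (x z : Fin m → ℝ) (y w : Fin n → ℝ) :
    F L x (c • z) y w = c * F L x z y w := by
  rw [F, outer_smul_left, act_smul, hsInner_smul_right]; rfl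

lemma F_smul3 (L) (c : ℝ) (x z : Fin m → ℝ) (y w : Fin n → ℝ) :
    F L x z (c • y) w = c * F L x z y w := by
  rw [F, outer_smul_right, act_smul, hsInner_smul_left]; rfl

lemma F_smul4 (L) (c : ℝ) (x z : Fin m → ℝ) (y w : Fin n → ℝ) :
    F L x z y (c • w) = c * F L x z y w := by
  rw [F, outer_smul_right, act_smul, hsInner_smul_right]; rfl

lemma sum_add_expand (x z : Fin m → ℝ) :
    ∑ i, (x + z) i * (x + z) i
      = ∑ i, x i * x i + 2 * ∑ i, x i * z i + ∑ i, z i * z i := by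
  have : ∀ i, (x + z) i * (x + z) i = x i * x i + 2 * (x i * z i) + z i * z i := by
    intro i; simp [Pi.add_apply]; ring
  simp only [this, Finset.sum_add_distrib, Finset.mul_sum]

/-- Polarization: from the quadratic identity deduce the full identity. -/
lemma polarize (L : Matrix (Fin m × Fin n) (Fin m × Fin n) ℝ)
    (h : ∀ (x : Fin m → ℝ) (y : Fin n → ℝ),
      F L x x y y = (∑ i, x i * x i) * (∑ j, y j * y j)) :
    ∀ (x z : Fin m → ℝ) (y w : Fin n → ℝ),
      F L x z y w + F L x z w y = 2 * ((∑ i, x i * z i) * (∑ j, y j * w j)) := by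
  have step1 : ∀ (x z : Fin m → ℝ) (y : Fin n → ℝ),
      F L x z y y = (∑ i, x i * z i) * (∑ j, y j * y j) := by
    intro x z y
    have e := h (x + z) y
    rw [F_add1, F_add2, F_add2, sum_add_expand] at e
    have hsym : F L z x y y = F L x z y y := F_swap L z x y y
    have h1 := h x y
    have h2 := h z y
    nlinarith [e, h1, h2, hsym]
  intro x z y w
  have e := step1 x z (y + w)
  rw [F_add3, F_add4, F_add4, sum_add_expand y w] at e
  have h1 := step1 x z y
  have h2 := step1 x z w
  nlinarith [e, h1, h2]

lemma F_scale (L : Matrix (Fin m × Fin n) (Fin m × Fin n) ℝ) (c d : ℝ)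
    (x : Fin m → ℝ) (y : Fin n → ℝ) :
    F L (c • x) (c • x) (d • y) (d • y) = c ^ 2 * d ^ 2 * F L x x y y := by
  rw [F_smul1, F_smul2, F_smul3, F_smul4]; ring

/-- From the inequality on unit vectors and the normalization, equality on unit
vectors extends to the quadratic identity everywhere. -/
lemma quad_of_unit (L : Matrix (Fin m × Fin n) (Fin m × Fin n) ℝ)
    (h : ∀ (x : Fin m → ℝ) (y : Fin n → ℝ),
      (∑ i, x i * x i) = 1 → (∑ j, y j * y j) = 1 → F L x x y y = 1) :
    ∀ (x : Fin m → ℝ) (y : Fin n → ℝ),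
      F L x x y y = (∑ i, x i * x i) * (∑ j, y j * y j) := by
  intro x y
  set Sx := ∑ i, x i * x i with hSx
  set Sy := ∑ j, y j * y j with hSy
  have hSx0 : 0 ≤ Sx := Finset.sum_nonneg fun i _ => mul_self_nonneg _
  have hSy0 : 0 ≤ Sy := Finset.sum_nonneg fun j _ => mul_self_nonneg _
  rcases eq_or_lt_of_le hSx0 with hx0 | hx0
  · have hx : x = 0 := by
      funext i
      have := (Finset.sum_eq_zero_iff_of_nonneg
        (fun i _ => mul_self_nonneg (x i))).mp hx0.symm i (Finset.mem_univ i)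
      exact mul_self_eq_zero.mp this
    subst hx
    simp [F, outer, act, hsInner, ← hx0]
  rcases eq_or_lt_of_le hSy0 with hy0 | hy0
  · have hy : y = 0 := by
      funext j
      have := (Finset.sum_eq_zero_iff_of_nonneg
        (fun j _ => mul_self_nonneg (y j))).mp hy0.symm j (Finset.mem_univ j)
      exact mul_self_eq_zero.mp this
    subst hy
    simp [F, outer, act, hsInner, ← hy0]
  · set a := Real.sqrt Sx with ha
    set b := Real.sqrt Sy with hb
    have ha0 : 0 < a := Real.sqrt_pos.mpr hx0
    have hb0 : 0 < b := Real.sqrt_pos.mpr hy0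
    have ha2 : a ^ 2 = Sx := Real.sq_sqrt hSx0
    have hb2 : b ^ 2 = Sy := Real.sq_sqrt hSy0
    set x' : Fin m → ℝ := a⁻¹ • x with hx'
    set y' : Fin n → ℝ := b⁻¹ • y with hy'
    have hxx' : x = a • x' := by
      rw [hx', smul_smul, mul_inv_cancel₀ ha0.ne', one_smul]
    have hyy' : y = b • y' := by
      rw [hy', smul_smul, mul_inv_cancel₀ hb0.ne', one_smul]
    have hSx' : ∑ i, x' i * x' i = 1 := by
      rw [hx']
      have : ∀ i, (a⁻¹ • x) i * (a⁻¹ • x) i = a⁻¹ * a⁻¹ * (x i * x i) := by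
        intro i; simp [Pi.smul_apply, smul_eq_mul]; ring
      simp only [this, ← Finset.mul_sum, ← hSx]
      field_simp
      nlinarith [ha2]
    have hSy' : ∑ j, y' j * y' j = 1 := by
      rw [hy']
      have : ∀ j, (b⁻¹ • y) j * (b⁻¹ • y) j = b⁻¹ * b⁻¹ * (y j * y j) := by
        intro j; simp [Pi.smul_apply, smul_eq_mul]; ring
      simp only [this, ← Finset.mul_sum, ← hSy]
      field_simp
      nlinarith [hb2]
    have key := h x' y' hSx' hSy'
    calc F L x x y y = F L (a • x') (a • x') (b • y') (b • y') := by rw [← hxx', ← hyy']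
      _ = a ^ 2 * b ^ 2 * F L x' x' y' y' := F_scale L a b x' y'
      _ = Sx * Sy := by rw [key, ha2, hb2]; ring

lemma convex_hsBall : Convex ℝ (hsBall m n) := by
  intro A hA B hB s t hs ht hst
  have hA1 : hsInner A A ≤ 1 := hA
  have hB1 : hsInner B B ≤ 1 := hB
  have hCS := hsInner_CS A B
  have hAB : hsInner A B ≤ 1 := by
    nlinarith [hsInner_self_nonneg A, hsInner_self_nonneg B]
  have expand : hsInner (s • A + t • B) (s • A + t • B)
      = s ^ 2 * hsInner A A + 2 * s * t * hsInner A B + t ^ 2 * hsInner B B := by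
    simp only [hsInner_add_left, hsInner_add_right, hsInner_smul_left,
      hsInner_smul_right, hsInner_comm B A]
    ring
  show hsInner (s • A + t • B) (s • A + t • B) ≤ 1
  rw [expand]
  nlinarith [mul_nonneg hs ht, sq_nonneg (s - t), sq_nonneg (s + t)]

end EllAux

open EllAux

theorem ellipsoid_inner_product_characterization (m n : ℕ)
    (T : Matrix (Fin m × Fin n) (Fin m × Fin n) ℝ) (hT : IsUnit T)
    (E : Set (Matrix (Fin m) (Fin n) ℝ)) (hE : E = act T '' hsBall m n) :
    (projTP (euclBall m) (euclBall n) ⊆ E ∧ E ⊆ polar (projTP (euclBall m) (euclBall n))) ↔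
    (∀ L ∈ ({T⁻¹, T.transpose} : Set (Matrix (Fin m × Fin n) (Fin m × Fin n) ℝ)),
      ∀ (x z : Fin m → ℝ) (y w : Fin n → ℝ),
        (∑ i, x i * z i) * (∑ j, y j * w j) =
          (hsInner (act L (outer x y)) (act L (outer z w)) +
            hsInner (act L (outer x w)) (act L (outer z y))) / 2) := by
  have hdet : IsUnit T.det := (Matrix.isUnit_iff_isUnit_det T).mp hT
  have hinv1 : T⁻¹ * T = 1 := Matrix.nonsing_inv_mul T hdet
  have hinv2 : T * T⁻¹ = 1 := Matrix.mul_nonsing_inv T hdet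
  have hgen : ∀ (x : Fin m → ℝ) (y : Fin n → ℝ), (∑ i, x i * x i) ≤ 1 →
      (∑ j, y j * y j) ≤ 1 → outer x y ∈ projTP (euclBall m) (euclBall n) := by
    intro x y hx hy
    apply subset_convexHull
    exact ⟨x, by simpa [euclBall, pow_two] using hx, y,
      by simpa [euclBall, pow_two] using hy, rfl⟩
  constructor
  · rintro ⟨h1, h2⟩
    have claimInv : ∀ (x : Fin m → ℝ) (y : Fin n → ℝ), (∑ i, x i * x i) ≤ 1 →
        (∑ j, y j * y j) ≤ 1 → F T⁻¹ x x y y ≤ 1 := by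
      intro x y hx hy
      have hmem : outer x y ∈ E := h1 (hgen x y hx hy)
      rw [hE] at hmem
      obtain ⟨A, hA, hTA⟩ := hmem
      have hAeq : act T⁻¹ (outer x y) = A := by
        rw [← hTA, act_act, hinv1, act_one]
      show hsInner (act T⁻¹ (outer x y)) (act T⁻¹ (outer x y)) ≤ 1
      rw [hAeq]; exact hA
    have claimT : ∀ (x : Fin m → ℝ) (y : Fin n → ℝ), (∑ i, x i * x i) ≤ 1 →
        (∑ j, y j * y j) ≤ 1 → F T.transpose x x y y ≤ 1 := by
      intro x y hx hy
      set B := act T.transpose (outer x y) with hBdef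
      show hsInner B B ≤ 1
      by_contra hS
      push_neg at hS
      set S := hsInner B B with hSdef
      have hS0 : (0 : ℝ) < S := lt_trans one_pos hS
      have hsqrt : 0 < Real.sqrt S := Real.sqrt_pos.mpr hS0
      have hss : Real.sqrt S * Real.sqrt S = S := Real.mul_self_sqrt hS0.le
      set c := (Real.sqrt S)⁻¹ with hc
      have hAmem : (c • B) ∈ hsBall m n := by
        show hsInner (c • B) (c • B) ≤ 1
        rw [hsInner_smul_left, hsInner_smul_right, ← hSdef]
        have : c * (c * S) = 1 := by
          rw [hc, ← mul_assoc, ← mul_inv, hss, inv_mul_cancel₀ hS0.ne']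
        rw [this]
      have hpol : act T (c • B) ∈ polar (projTP (euclBall m) (euclBall n)) :=
        h2 (hE ▸ ⟨c • B, hAmem, rfl⟩)
      have hu := hpol (outer x y) (hgen x y hx hy)
      have heq : hsInner (outer x y) (act T (c • B)) = c * S := by
        rw [hsInner_comm, hsInner_act, ← hBdef, hsInner_smul_left, hSdef]
      have hcs : c * S = Real.sqrt S := by
        calc c * S = (Real.sqrt S)⁻¹ * (Real.sqrt S * Real.sqrt S) := by rw [hc, hss]
          _ = Real.sqrt S := by rw [← mul_assoc, inv_mul_cancel₀ hsqrt.ne', one_mul]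
      rw [heq, hcs] at hu
      have : Real.sqrt S ≤ 1 := le_of_abs_le hu
      nlinarith [hss]
    have hunit : ∀ L ∈ ({T⁻¹, T.transpose} : Set (Matrix (Fin m × Fin n) (Fin m × Fin n) ℝ)),
        ∀ (x : Fin m → ℝ) (y : Fin n → ℝ), (∑ i, x i * x i) = 1 →
        (∑ j, y j * y j) = 1 → F L x x y y = 1 := by
      intro L hL x y hx hy
      set u := outer x y with hu
      set a := act T⁻¹ u with hadef
      set b := act T.transpose u with hbdef
      have hab : hsInner a b = 1 := by
        have e1 : hsInner (act T a) u = hsInner a (act T.transpose u) := hsInner_act T a u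
        have e2 : act T a = u := by rw [hadef, act_act, hinv2, act_one]
        rw [e2, ← hbdef] at e1
        rw [← e1, hu, hsInner_outer, hx, hy, one_mul]
      have haa : hsInner a a ≤ 1 := claimInv x y hx.le hy.le
      have hbb : hsInner b b ≤ 1 := claimT x y hx.le hy.le
      have hCS := hsInner_CS a b
      have h0a := hsInner_self_nonneg a
      have h0b := hsInner_self_nonneg b
      have haa1 : hsInner a a = 1 := by nlinarith
      have hbb1 : hsInner b b = 1 := by nlinarith
      rcases hL with rfl | hL
      · exact haa1
      · rw [Set.mem_singleton_iff] at hL; subst hL; exact hbb1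
    intro L hL x z y w
    have hquadL := quad_of_unit L (fun x y hx hy => hunit L hL x y hx hy)
    have hp := polarize L hquadL x z y w
    simp only [F] at hp
    linarith
  · intro h
    have hquad : ∀ L ∈ ({T⁻¹, T.transpose} : Set (Matrix (Fin m × Fin n) (Fin m × Fin n) ℝ)),
        ∀ (x : Fin m → ℝ) (y : Fin n → ℝ),
        hsInner (act L (outer x y)) (act L (outer x y))
          = (∑ i, x i * x i) * (∑ j, y j * y j) := by
      intro L hL x y
      have := h L hL x x y y
      linarith
    have hquadInv := hquad T⁻¹ (Set.mem_insert _ _)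
    have hquadT := hquad T.transpose (Set.mem_insert_of_mem _ rfl)
    constructor
    · rw [hE]
      apply convexHull_min
      · rintro M ⟨x, hx, y, hy, rfl⟩
        refine ⟨act T⁻¹ (outer x y), ?_, ?_⟩
        · show hsInner (act T⁻¹ (outer x y)) (act T⁻¹ (outer x y)) ≤ 1
          rw [hquadInv x y]
          have hx' : ∑ i, x i * x i ≤ 1 := by simpa [euclBall, pow_two] using hx
          have hy' : ∑ j, y j * y j ≤ 1 := by simpa [euclBall, pow_two] using hy
          have h0x : (0 : ℝ) ≤ ∑ i, x i * x i :=
            Finset.sum_nonneg fun i _ => mul_self_nonneg _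
          have h0y : (0 : ℝ) ≤ ∑ j, y j * y j :=
            Finset.sum_nonneg fun j _ => mul_self_nonneg _
          nlinarith
        · rw [act_act, hinv2, act_one]
      · exact (convex_hsBall).is_linear_image (act_linear T)
    · rw [hE]
      rintro _ ⟨A, hA, rfl⟩
      intro u hu
      have hsub : projTP (euclBall m) (euclBall n) ⊆ {v | |hsInner v (act T A)| ≤ 1} := by
        apply convexHull_min
        · rintro _ ⟨x, hx, y, hy, rfl⟩
          show |hsInner (outer x y) (act T A)| ≤ 1
          rw [hsInner_comm, hsInner_act]
          rw [abs_le_one_iff_mul_self_le_one]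
          have hCS := hsInner_CS A (act T.transpose (outer x y))
          have hq := hquadT x y
          have hx' : ∑ i, x i * x i ≤ 1 := by simpa [euclBall, pow_two] using hx
          have hy' : ∑ j, y j * y j ≤ 1 := by simpa [euclBall, pow_two] using hy
          have h0x : (0 : ℝ) ≤ ∑ i, x i * x i :=
            Finset.sum_nonneg fun i _ => mul_self_nonneg _
          have h0y : (0 : ℝ) ≤ ∑ j, y j * y j :=
            Finset.sum_nonneg fun j _ => mul_self_nonneg _
          have hA1 : hsInner A A ≤ 1 := hA
          have h0A := hsInner_self_nonneg A
          have hbb1 : hsInner (act T.transpose (outer x y)) (act T.transpose (outer x y)) ≤ 1 := by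
            rw [hq]; nlinarith
          have h0bb := hsInner_self_nonneg (act T.transpose (outer x y))
          nlinarith [hCS, hA1, h0A, hbb1, h0bb]
        · intro v1 hv1 v2 hv2 s t hs ht hst
          show |hsInner (s • v1 + t • v2) (act T A)| ≤ 1
          rw [hsInner_add_left, hsInner_smul_left, hsInner_smul_left]
          calc |s * hsInner v1 (act T A) + t * hsInner v2 (act T A)|
              ≤ |s * hsInner v1 (act T A)| + |t * hsInner v2 (act T A)| := abs_add_le _ _
            _ = s * |hsInner v1 (act T A)| + t * |hsInner v2 (act T A)| := by
                rw [abs_mul, abs_mul, abs_of_nonneg hs, abs_of_nonneg ht]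
            _ ≤ s * 1 + t * 1 := by
                gcongr
                · exact hv1
                · exact hv2
            _ = 1 := by rw [mul_one, mul_one, hst]
      exact hsub hu
end

section
/- Matrix rigidity lemma: let d = mn and let S be a positive definite d×d real matrix written in m×m block form with n×n blocks, such that all diagonal blocks of S and of S⁻¹ equal Iₙ, and all off-diagonal blocks of S and of S⁻¹ are antisymmetric (with S itself symmetric, so the (i,k) block is minus the transpose of the (k,i) block). Then S = I_d. -/
open Set

/-- The (k,i) block of an (m*n)×(m*n)-matrix indexed by pairs. -/
def blk {m n : ℕ} (S : Matrix (Fin m × Fin n) (Fin m × Fin n) ℝ) (k i : Fin m) :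
    Matrix (Fin n) (Fin n) ℝ :=
  fun a b => S (k, a) (i, b)

theorem block_rigidity (m n : ℕ) (S : Matrix (Fin m × Fin n) (Fin m × Fin n) ℝ)
    (hpd : S.PosDef)
    (hdiag : ∀ k, blk S k k = 1)
    (hanti : ∀ k i, k ≠ i → (blk S k i).transpose = -(blk S k i))
    (hdiag' : ∀ k, blk S⁻¹ k k = 1)
    (hanti' : ∀ k i, k ≠ i → (blk S⁻¹ k i).transpose = -(blk S⁻¹ k i)) :
    S = 1 := by
    -- The antisymmetry hypotheses are not needed.
  have hSdet : IsUnit S.det := isUnit_iff_ne_zero.mpr hpd.det_pos.ne'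
  have hSinv : S * S⁻¹ = 1 := Matrix.mul_nonsing_inv S hSdet
  have hinvS : S⁻¹ * S = 1 := Matrix.nonsing_inv_mul S hSdet
  have hherm : (S - 1).conjTranspose = S - 1 := by
    rw [Matrix.conjTranspose_sub, hpd.isHermitian.eq, Matrix.conjTranspose_one]
  -- A := (S-1) S⁻¹ (S-1) is positive semidefinite
  have hApsd : ((S - 1) * S⁻¹ * (S - 1)).PosSemidef := by
    have := (hpd.inv.posSemidef).conjTranspose_mul_mul_same (S - 1)
    rwa [hherm] at this
  -- A = S + S⁻¹ - 2
  have hAeq : (S - 1) * S⁻¹ * (S - 1) = S + S⁻¹ - 2 := by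
    have h2 : (2 : Matrix (Fin m × Fin n) (Fin m × Fin n) ℝ) = 1 + 1 := by norm_num
    have hstep : (S - 1) * S⁻¹ = 1 - S⁻¹ := by
      rw [Matrix.sub_mul, hSinv, Matrix.one_mul]
    rw [hstep, Matrix.sub_mul, Matrix.one_mul, Matrix.mul_sub, hinvS, Matrix.mul_one, h2]
    abel
  -- trace of A is zero
  have htrS : S.trace = (Finset.univ : Finset (Fin m × Fin n)).card := by
    rw [Matrix.trace, Finset.card_eq_sum_ones]
    push_cast
    refine Finset.sum_congr rfl fun p _ => ?_
    have := congrFun (congrFun (hdiag p.1) p.2) p.2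
    simpa [blk, Matrix.diag, Matrix.one_apply] using this
  have htrS' : (S⁻¹).trace = (Finset.univ : Finset (Fin m × Fin n)).card := by
    rw [Matrix.trace, Finset.card_eq_sum_ones]
    push_cast
    refine Finset.sum_congr rfl fun p _ => ?_
    have := congrFun (congrFun (hdiag' p.1) p.2) p.2
    simpa [blk, Matrix.diag, Matrix.one_apply] using this
  have htr2 : (2 : Matrix (Fin m × Fin n) (Fin m × Fin n) ℝ).trace
      = 2 * (Finset.univ : Finset (Fin m × Fin n)).card := by
    have h2 : (2 : Matrix (Fin m × Fin n) (Fin m × Fin n) ℝ) = 1 + 1 := by norm_num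
    rw [h2, Matrix.trace_add, Matrix.trace_one, Finset.card_univ]
    ring
  have htrA : ((S - 1) * S⁻¹ * (S - 1)).trace = 0 := by
    rw [hAeq, Matrix.trace_sub, Matrix.trace_add, htrS, htrS', htr2]
    ring
  -- a PSD matrix with zero trace is zero
  obtain ⟨B, hB⟩ : ∃ B : Matrix (Fin m × Fin n) (Fin m × Fin n) ℝ,
      (S - 1) * S⁻¹ * (S - 1) = B.conjTranspose * B := by
    open scoped MatrixOrder Matrix.Norms.L2Operator in
    obtain ⟨B, hB⟩ := CStarAlgebra.nonneg_iff_eq_star_mul_self.mp hApsd.nonneg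
    exact ⟨B, by rw [hB, Matrix.star_eq_conjTranspose]⟩
  have hB0 : B = 0 := by
    rw [hB] at htrA
    have hexp : (B.conjTranspose * B).trace = ∑ i : Fin m × Fin n, ∑ j : Fin m × Fin n, (B j i) ^ 2 := by
      rw [Matrix.trace]
      refine Finset.sum_congr rfl fun i _ => ?_
      simp [Matrix.diag, Matrix.mul_apply, Matrix.conjTranspose_apply, sq, mul_comm]
    rw [hexp] at htrA
    ext j i
    have h1 : ∀ i ∈ (Finset.univ : Finset (Fin m × Fin n)),
        0 ≤ ∑ j : Fin m × Fin n, (B j i) ^ 2 :=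
      fun i _ => Finset.sum_nonneg fun j _ => sq_nonneg _
    have h2 := (Finset.sum_eq_zero_iff_of_nonneg h1).mp htrA i (Finset.mem_univ i)
    have h3 := (Finset.sum_eq_zero_iff_of_nonneg
      (fun j _ => sq_nonneg (B j i))).mp h2 j (Finset.mem_univ j)
    simpa using sq_eq_zero_iff.mp h3
  have hA0 : S + S⁻¹ - 2 = 0 := by
    rw [← hAeq, hB, hB0]
    simp
  -- hence S⁻¹ = 2 - S, so (S-1)² = 0
  have hinv_eq : S⁻¹ = 2 - S := by
    have h := hA0
    rw [sub_eq_zero] at h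
    exact eq_sub_of_add_eq' h
  have hss : S * S = 2 * S - 1 := by
    have h := hSinv
    rw [hinv_eq, Matrix.mul_sub] at h
    have h2 : S * 2 = 2 * S := by
      have : (2 : Matrix (Fin m × Fin n) (Fin m × Fin n) ℝ) = 1 + 1 := by norm_num
      rw [this, Matrix.mul_add, Matrix.add_mul, Matrix.one_mul, Matrix.mul_one]
    rw [h2] at h
    have h4 : 2 * S = 1 + S * S := sub_eq_iff_eq_add.mp h
    rw [h4]
    abel
  have hsq : (S - 1) * (S - 1) = 0 := by
    rw [Matrix.sub_mul, Matrix.mul_sub, Matrix.mul_sub, Matrix.one_mul, Matrix.mul_one, hss,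
      two_mul]
    simp only [Matrix.one_mul, Matrix.mul_one]
    abel
  have hz : (S - 1).conjTranspose * (S - 1) = 0 := by rw [hherm, hsq]
  have := Matrix.conjTranspose_mul_self_eq_zero.mp hz
  exact sub_eq_zero.mp this
end

section
/- If E ⊆ ℝ^m ⊗ ℝ^n is an ellipsoid satisfying B₂^m ⊗_π B₂^n ⊆ E ⊆ B₂^m ⊗_ε B₂^n, then E = B₂^{m,n}, the Hilbert–Schmidt unit ball. -/
open Set Matrix

lemma hsInner_eq {m n : ℕ} (A B : Matrix (Fin m) (Fin n) ℝ) :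
    hsInner A B = ∑ p : Fin m × Fin n, A p.1 p.2 * B p.1 p.2 := by
  rw [hsInner]
  exact (Fintype.sum_prod_type (f := fun p : Fin m × Fin n => A p.1 p.2 * B p.1 p.2)).symm

lemma hsInner_comm {m n : ℕ} (A B : Matrix (Fin m) (Fin n) ℝ) : hsInner A B = hsInner B A := by
  simp [hsInner, mul_comm]

lemma hsInner_smul_left {m n : ℕ} (c : ℝ) (A B : Matrix (Fin m) (Fin n) ℝ) :
    hsInner (c • A) B = c * hsInner A B := by
  simp [hsInner, Finset.mul_sum, mul_assoc]

lemma hsInner_act {m n : ℕ} (T : Matrix (Fin m × Fin n) (Fin m × Fin n) ℝ)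
    (A B : Matrix (Fin m) (Fin n) ℝ) :
    hsInner (act T A) B = hsInner A (act Tᵀ B) := by
  simp only [hsInner_eq, act, Matrix.transpose_apply, Finset.sum_mul, Finset.mul_sum]
  rw [Finset.sum_comm]
  exact Finset.sum_congr rfl fun q _ => Finset.sum_congr rfl fun p _ => by ring

lemma act_mul {m n : ℕ} (T S : Matrix (Fin m × Fin n) (Fin m × Fin n) ℝ)
    (A : Matrix (Fin m) (Fin n) ℝ) : act (T * S) A = act T (act S A) := by
  funext i j
  simp only [act, Matrix.mul_apply, Finset.sum_mul, Finset.mul_sum]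
  rw [Finset.sum_comm]
  exact Finset.sum_congr rfl fun q _ => Finset.sum_congr rfl fun p _ => by ring

lemma act_one {m n : ℕ} (A : Matrix (Fin m) (Fin n) ℝ) : act 1 A = A := by
  funext i j
  simp only [act, Matrix.one_apply, ite_mul, one_mul, zero_mul]
  rw [Finset.sum_ite_eq]
  simp

lemma act_single {m n : ℕ} (M : Matrix (Fin m × Fin n) (Fin m × Fin n) ℝ) (k : Fin m) (l : Fin n)
    (i : Fin m) (j : Fin n) :
    act M (outer (Pi.single k 1) (Pi.single l 1)) i j = M (i, j) (k, l) := by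
  have : ∀ q : Fin m × Fin n, M (i, j) q * (outer (Pi.single k 1) (Pi.single l 1)) q.1 q.2
      = if (k, l) = q then M (i, j) q else 0 := by
    rintro ⟨a, b⟩
    simp only [outer, Pi.single_apply, Prod.mk.injEq]
    by_cases h1 : k = a <;> by_cases h2 : l = b <;> simp [h1, h2, eq_comm]
  rw [act, Finset.sum_congr rfl fun q _ => this q, Finset.sum_ite_eq]
  simp

lemma hsInner_single {m n : ℕ} (k : Fin m) (l : Fin n) :
    hsInner (outer (Pi.single k 1) (Pi.single l 1)) (outer (Pi.single k 1) (Pi.single l 1)) = 1 := by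
  have : ∀ p : Fin m × Fin n,
      (outer (Pi.single k 1) (Pi.single l 1)) p.1 p.2 * (outer (Pi.single k 1) (Pi.single l 1)) p.1 p.2
      = if (k, l) = p then 1 else 0 := by
    rintro ⟨a, b⟩
    simp only [outer, Pi.single_apply, Prod.mk.injEq]
    by_cases h1 : k = a <;> by_cases h2 : l = b <;> simp [h1, h2, eq_comm]
  rw [hsInner_eq, Finset.sum_congr rfl fun p _ => this p, Finset.sum_ite_eq]
  simp

lemma single_mem_ball {d : ℕ} (k : Fin d) : ∑ i, (Pi.single k 1 : Fin d → ℝ) i ^ 2 ≤ 1 := by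
  have : ∀ i : Fin d, (Pi.single k 1 : Fin d → ℝ) i ^ 2 = if k = i then 1 else 0 := by
    intro i; by_cases h : k = i <;> simp [Pi.single_apply, h]
  rw [Finset.sum_congr rfl fun i _ => this i, Finset.sum_ite_eq]
  simp

lemma hsInner_self_le_one {m n : ℕ} (a : Matrix (Fin m) (Fin n) ℝ)
    (h : ∀ A, hsInner A A ≤ 1 → hsInner A a ≤ 1) : hsInner a a ≤ 1 := by
  by_contra hs
  push_neg at hs
  have hs0 : (0:ℝ) < hsInner a a := lt_trans one_pos hs
  set s := hsInner a a with hsdef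
  set c := (Real.sqrt s)⁻¹ with hc
  have hsqrt : 0 < Real.sqrt s := Real.sqrt_pos.mpr hs0
  have h1 : hsInner (c • a) (c • a) ≤ 1 := by
    rw [hsInner_smul_left, hsInner_comm, hsInner_smul_left, hsInner_comm]
    rw [hc]
    rw [show (Real.sqrt s)⁻¹ * ((Real.sqrt s)⁻¹ * s) = s / (Real.sqrt s * Real.sqrt s) by ring]
    rw [Real.mul_self_sqrt hs0.le, div_self hs0.ne']
  have h2 := h _ h1
  rw [hsInner_smul_left, hc] at h2
  have : Real.sqrt s ≤ 1 := by
    have : (Real.sqrt s)⁻¹ * s = Real.sqrt s := by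
      rw [inv_mul_eq_div, ← Real.sqrt_mul_self hs0.le]
      field_simp [Real.mul_self_sqrt hs0.le]
      rw [Real.sq_sqrt (Real.sqrt_nonneg _)]
    linarith [this ▸ h2]
  have : (1:ℝ) < Real.sqrt s := by
    rw [show (1:ℝ) = Real.sqrt 1 by simp]
    exact Real.sqrt_lt_sqrt (by norm_num) hs
  linarith

lemma eq_of_hsInner {m n : ℕ} (a b : Matrix (Fin m) (Fin n) ℝ)
    (ha : hsInner a a ≤ 1) (hb : hsInner b b ≤ 1) (hab : hsInner a b = 1) : a = b := by
  have hexp : hsInner (a - b) (a - b) = hsInner a a - 2 * hsInner a b + hsInner b b := by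
    simp only [hsInner_eq, Matrix.sub_apply, Finset.mul_sum, ← Finset.sum_sub_distrib,
      ← Finset.sum_add_distrib]
    exact Finset.sum_congr rfl fun p _ => by ring
  have key : hsInner (a - b) (a - b) ≤ 0 := by rw [hexp]; linarith
  have hnn : ∀ p : Fin m × Fin n, p ∈ Finset.univ →
      (0:ℝ) ≤ (a - b) p.1 p.2 * (a - b) p.1 p.2 := fun p _ => mul_self_nonneg _
  rw [hsInner_eq] at key
  have hz := le_antisymm key (Finset.sum_nonneg hnn)
  have hall := (Finset.sum_eq_zero_iff_of_nonneg hnn).mp hz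
  funext i j
  have := hall (i, j) (Finset.mem_univ _)
  have : (a - b) i j = 0 := by nlinarith [this]
  have := sub_eq_zero.mp (by simpa [Matrix.sub_apply] using this)
  exact this


theorem ellipsoid_between_is_hs_ball (m n : ℕ)
    (E : Set (Matrix (Fin m) (Fin n) ℝ))
    (hell : ∃ T : Matrix (Fin m × Fin n) (Fin m × Fin n) ℝ, IsUnit T ∧ E = act T '' hsBall m n)
    (hπ : projTP (euclBall m) (euclBall n) ⊆ E)
    (hε : E ⊆ polar (projTP (euclBall m) (euclBall n))) :
    E = hsBall m n := by
  obtain ⟨T, hT, hE⟩ := hell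
  obtain ⟨Tu, hTu⟩ := hT
  set Ti : Matrix (Fin m × Fin n) (Fin m × Fin n) ℝ := ↑Tu⁻¹ with hTi
  have hTi1 : T * Ti = 1 := by rw [← hTu, hTi]; exact_mod_cast Tu.mul_inv
  have hTi2 : Ti * T = 1 := by rw [← hTu, hTi]; exact_mod_cast Tu.inv_mul
  -- rank-one generators are in the generating set of projTP
  have hgenset : ∀ x ∈ euclBall m, ∀ y ∈ euclBall n,
      outer x y ∈ projTP (euclBall m) (euclBall n) := fun x hx y hy =>
    subset_convexHull ℝ _ ⟨x, hx, y, hy, rfl⟩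
  -- key: for every k l, act Tᵀ u = act Ti u where u = E_{kl}
  have key : ∀ (k : Fin m) (l : Fin n),
      act Tᵀ (outer (Pi.single k 1) (Pi.single l 1))
        = act Ti (outer (Pi.single k 1) (Pi.single l 1)) := by
    intro k l
    set u := outer (Pi.single k 1) (Pi.single l 1) with hu
    have hum : u ∈ projTP (euclBall m) (euclBall n) :=
      hgenset _ (single_mem_ball k) _ (single_mem_ball l)
    set a := act Tᵀ u with ha
    set b := act Ti u with hb
    -- b has norm ≤ 1 : u ∈ E means u = act T A, b = A
    obtain ⟨A, hA, hAu⟩ : ∃ A, hsInner A A ≤ 1 ∧ act T A = u := by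
      have := hπ hum; rw [hE] at this; obtain ⟨A, hA, hAu⟩ := this; exact ⟨A, hA, hAu⟩
    have hbA : b = A := by rw [hb, ← hAu, ← act_mul, hTi2, act_one]
    have hbb : hsInner b b ≤ 1 := by rw [hbA]; exact hA
    -- a has norm ≤ 1 : from the polar condition
    have haa : hsInner a a ≤ 1 := by
      apply hsInner_self_le_one
      intro B hB
      have hmem : act T B ∈ E := by rw [hE]; exact ⟨B, hB, rfl⟩
      have := hε hmem u hum
      have heq : hsInner u (act T B) = hsInner B a := by
        rw [hsInner_comm, hsInner_act, ha]
      rw [heq] at this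
      exact le_trans (le_abs_self _) this
    -- inner product a b = 1
    have hab : hsInner a b = 1 := by
      rw [ha, hsInner_act, Matrix.transpose_transpose, hb, ← act_mul, hTi1, act_one,
        hu, hsInner_single]
    exact eq_of_hsInner a b haa hbb hab
  -- deduce Tᵀ = Ti
  have hTt : Tᵀ = Ti := by
    ext p q
    have h := key q.1 q.2
    have h2 := congrFun (congrFun h p.1) p.2
    rw [act_single, act_single] at h2
    simpa using h2
  have hTTt : T * Tᵀ = 1 := by rw [hTt]; exact hTi1
  have hTtT : Tᵀ * T = 1 := by rw [hTt]; exact hTi2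
  rw [hE]
  ext z
  constructor
  · rintro ⟨A, hA, rfl⟩
    show hsInner (act T A) (act T A) ≤ 1
    rw [hsInner_act, ← act_mul, hTtT, act_one]
    exact hA
  · intro hz
    refine ⟨act Tᵀ z, ?_, ?_⟩
    · show hsInner (act Tᵀ z) (act Tᵀ z) ≤ 1
      rw [hsInner_act, Matrix.transpose_transpose, ← act_mul, hTTt, act_one]
      exact hz
    · rw [← act_mul, hTTt, act_one]
end
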